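/- Let g, h ∈ Homeo₊(ℝ) be orientation-preserving homeomorphisms such that Fix(g) = {x, y} with g(t) < t on (−∞, x) and g(t) > t on (x, y) ∪ (y, +∞), and Fix(h) = {x̃, ỹ} with h(t) < t on (−∞, x̃) and h(t) > t on (x̃, ỹ) ∪ (ỹ, +∞), where x < x̃ < ỹ < y. Then there exists n₀ ∈ ℕ such that for every n ≥ n₀, the composition h ∘ g⁻ⁿ is a non-identity homeomorphism with at least 3 fixed points: one in each of the intervals (h(x−1), x), (x, y), and (y, h(y+1)). -/

import Mathlib

open Function Set Filter Topology

/-- The group of homeomorphisms of the real line, with `(f * g) x = f (g x)`. -/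
abbrev HomeoR : Type := ℝ ≃ₜ ℝ

instance : Group HomeoR where
  mul f g := g.trans f
  one := Homeomorph.refl ℝ
  inv := Homeomorph.symm
  mul_assoc _ _ _ := rfl
  one_mul f := by ext x; rfl
  mul_one f := by ext x; rfl
  inv_mul_cancel f := by ext x; exact f.symm_apply_apply x

@[simp] lemma HomeoR.mul_apply (f g : HomeoR) (x : ℝ) : (f * g) x = f (g x) := rfl
@[simp] lemma HomeoR.one_apply (x : ℝ) : (1 : HomeoR) x = x := rfl
@[simp] lemma HomeoR.inv_eq_symm (f : HomeoR) : f⁻¹ = f.symm := rfl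

/-- The subgroup of orientation-preserving homeomorphisms of the line,
i.e. strictly increasing ones. -/
def HomeoPlus : Subgroup HomeoR where
  carrier := {f | StrictMono (f : ℝ → ℝ)}
  one_mem' := strictMono_id
  mul_mem' hf hg := hf.comp hg
  inv_mem' := by
    intro f hf a b hab
    have h := hf.lt_iff_lt (a := f.symm a) (b := f.symm b)
    rw [f.apply_symm_apply, f.apply_symm_apply] at h
    exact h.mp hab

/-- `G` has at most `N` fixed points: every non-identity element fixes at most `N` points. -/
def HasAtMostNFixedPoints (G : Subgroup HomeoR) (N : ℕ) : Prop :=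
  ∀ g ∈ G, g ≠ 1 → ∃ S : Finset ℝ, S.card ≤ N ∧ ∀ x : ℝ, g x = x → x ∈ S

/-- A continuous non-decreasing map `ℝ → ℝ` which is proper. -/
def MonotoneProper (h : ℝ → ℝ) : Prop :=
  Continuous h ∧ Monotone h ∧ Tendsto h atTop atTop ∧ Tendsto h atBot atBot

/-- The action of `G` is (positively) semi-conjugate to the action of `F`. -/
def IsSemiConjTo (G F : Subgroup HomeoR) : Prop :=
  ∃ (θ : G →* F) (h : ℝ → ℝ), Surjective θ ∧ MonotoneProper h ∧
    ∀ g : G, ∀ x : ℝ, (θ g : HomeoR) (h x) = h ((g : HomeoR) x)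

def IsAffineHomeo (f : HomeoR) : Prop := ∃ a b : ℝ, a ≠ 0 ∧ ∀ x : ℝ, f x = a * x + b

def IsTranslationHomeo (f : HomeoR) : Prop := ∃ b : ℝ, ∀ x : ℝ, f x = x + b

def IsIsometryHomeo (f : HomeoR) : Prop :=
  ∃ b : ℝ, (∀ x : ℝ, f x = x + b) ∨ (∀ x : ℝ, f x = -x + b)

def IsInvariantSet (G : Subgroup HomeoR) (S : Set ℝ) : Prop :=
  ∀ g ∈ G, ∀ x ∈ S, (g : HomeoR) x ∈ S

/-- A minimal invariant set: nonempty, closed, invariant, with no proper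
nonempty closed invariant subset. -/
def IsMinimalInvariant (G : Subgroup HomeoR) (M : Set ℝ) : Prop :=
  M.Nonempty ∧ IsClosed M ∧ IsInvariantSet G M ∧
    ∀ S : Set ℝ, S ⊆ M → S.Nonempty → IsClosed S → IsInvariantSet G S → S = M

def orbitSet (G : Subgroup HomeoR) (x : ℝ) : Set ℝ := {y | ∃ g ∈ G, (g : HomeoR) x = y}

/-- Two homeomorphisms of type `(−,+,+)` with fixed points `x < x̃ < ỹ < y` produce, for all
large `n`, an element `h ∘ g⁻ⁿ` with at least three fixed points. -/

lemma HomeoR.pow_apply (f : HomeoR) (n : ℕ) (x : ℝ) : (f ^ n) x = f^[n] x := by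
  induction n generalizing x with
  | zero => rw [pow_zero]; rfl
  | succ n ih =>
    rw [pow_succ, HomeoR.mul_apply, ih, Function.iterate_succ_apply]

lemma tendsto_iterate_up (G : HomeoR) (hG : StrictMono (G : ℝ → ℝ)) (c t : ℝ)
    (hc : G c = c) (ht : t < c) (hfix : ∀ s, s < c → s < G s) :
    Tendsto (fun n => (G : ℝ → ℝ)^[n] t) atTop (𝓝 c) := by
  set a : ℕ → ℝ := fun n => (G : ℝ → ℝ)^[n] t with ha
  have hstep : ∀ n, a (n + 1) = G (a n) := fun n => Function.iterate_succ_apply' _ n t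
  have hlt : ∀ n, a n < c := by
    intro n; induction n with
    | zero => exact ht
    | succ n ih => rw [hstep]; exact (hG ih).trans_eq hc
  have hmono : Monotone a := monotone_nat_of_le_succ (fun n => by
    rw [hstep]; exact (hfix _ (hlt n)).le)
  have hbdd : BddAbove (Set.range a) := ⟨c, by rintro _ ⟨n, rfl⟩; exact (hlt n).le⟩
  have hconv : Tendsto a atTop (𝓝 (⨆ n, a n)) := tendsto_atTop_ciSup hmono hbdd
  set L := ⨆ n, a n with hL
  have hfixL : G L = L := by
    have h1 : Tendsto (fun n => G (a n)) atTop (𝓝 (G L)) :=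
      (G.continuous.tendsto L).comp hconv
    have h2 : Tendsto (fun n => a (n + 1)) atTop (𝓝 L) :=
      hconv.comp (tendsto_add_atTop_nat 1)
    have heq : (fun n => G (a n)) = fun n => a (n + 1) := by
      funext n; exact (hstep n).symm
    rw [heq] at h1
    exact tendsto_nhds_unique h1 h2
  have hLle : L ≤ c := ciSup_le (fun n => (hlt n).le)
  rcases lt_or_eq_of_le hLle with hlt' | heq
  · exact absurd hfixL (hfix L hlt').ne'
  · rw [heq] at hconv; exact hconv

lemma tendsto_iterate_down (G : HomeoR) (hG : StrictMono (G : ℝ → ℝ)) (c t : ℝ)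
    (hc : G c = c) (ht : c < t) (hfix : ∀ s, c < s → G s < s) :
    Tendsto (fun n => (G : ℝ → ℝ)^[n] t) atTop (𝓝 c) := by
  set a : ℕ → ℝ := fun n => (G : ℝ → ℝ)^[n] t with ha
  have hstep : ∀ n, a (n + 1) = G (a n) := fun n => Function.iterate_succ_apply' _ n t
  have hlt : ∀ n, c < a n := by
    intro n; induction n with
    | zero => exact ht
    | succ n ih => rw [hstep]; exact lt_of_eq_of_lt hc.symm (hG ih)
  have hmono : Antitone a := antitone_nat_of_succ_le (fun n => by
    rw [hstep]; exact (hfix _ (hlt n)).le)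
  have hbdd : BddBelow (Set.range a) := ⟨c, by rintro _ ⟨n, rfl⟩; exact (hlt n).le⟩
  have hconv : Tendsto a atTop (𝓝 (⨅ n, a n)) := tendsto_atTop_ciInf hmono hbdd
  set L := ⨅ n, a n with hL
  have hfixL : G L = L := by
    have h1 : Tendsto (fun n => G (a n)) atTop (𝓝 (G L)) :=
      (G.continuous.tendsto L).comp hconv
    have h2 : Tendsto (fun n => a (n + 1)) atTop (𝓝 L) :=
      hconv.comp (tendsto_add_atTop_nat 1)
    have heq : (fun n => G (a n)) = fun n => a (n + 1) := by
      funext n; exact (hstep n).symm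
    rw [heq] at h1
    exact tendsto_nhds_unique h1 h2
  have hLle : c ≤ L := le_ciInf (fun n => (hlt n).le)
  rcases lt_or_eq_of_le hLle with hlt' | heq
  · exact absurd hfixL (hfix L hlt').ne
  · rw [← heq] at hconv; exact hconv

theorem type_mpp_three_fixed_points (g h : HomeoR)
    (hg : g ∈ HomeoPlus) (hh : h ∈ HomeoPlus)
    (x y xt yt : ℝ) (h1 : x < xt) (h2 : xt < yt) (h3 : yt < y)
    (hgfix : {t : ℝ | g t = t} = {x, y})
    (hgneg : ∀ t : ℝ, t < x → g t < t)
    (hgpos : ∀ t : ℝ, x < t → t ≠ y → t < g t)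
    (hhfix : {t : ℝ | h t = t} = {xt, yt})
    (hhneg : ∀ t : ℝ, t < xt → h t < t)
    (hhpos : ∀ t : ℝ, xt < t → t ≠ yt → t < h t) :
    ∃ n₀ : ℕ, ∀ n : ℕ, n₀ ≤ n →
      h * g⁻¹ ^ n ≠ 1 ∧
      (∃ p ∈ Set.Ioo (h (x - 1)) x, (h * g⁻¹ ^ n) p = p) ∧
      (∃ p ∈ Set.Ioo x y, (h * g⁻¹ ^ n) p = p) ∧
      (∃ p ∈ Set.Ioo y (h (y + 1)), (h * g⁻¹ ^ n) p = p) := by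
  have sh : StrictMono (h : ℝ → ℝ) := hh
  have sG : StrictMono (g.symm : ℝ → ℝ) := by
    have := HomeoPlus.inv_mem hg
    exact this
  have hxy : x < y := h1.trans (h2.trans h3)
  have gx : g x = x := by
    have : x ∈ {t : ℝ | g t = t} := by rw [hgfix]; exact Set.mem_insert x {y}
    exact this
  have gy : g y = y := by
    have : y ∈ {t : ℝ | g t = t} := by
      rw [hgfix]; exact Set.mem_insert_of_mem x rfl
    exact this
  have Gx : g.symm x = x := g.symm_apply_eq.mpr gx.symm
  have Gy : g.symm y = y := g.symm_apply_eq.mpr gy.symm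
  have hGpos : ∀ t : ℝ, t < x → t < g.symm t := by
    intro t htx
    have h2' := sG (hgneg t htx)
    rwa [g.symm_apply_apply] at h2'
  have hGneg : ∀ t : ℝ, y < t → g.symm t < t := by
    intro t hyt
    have h2' := sG (hgpos t (hxy.trans hyt) (ne_of_gt hyt))
    rwa [g.symm_apply_apply] at h2'
  have hx : h x < x := hhneg x h1
  have hy : y < h y := hhpos y (h2.trans h3) h3.ne'
  set t₀ : ℝ := (h (x - 1) + h x) / 2 with ht₀def
  have hx1 : h (x - 1) < h x := sh (by linarith)
  have ht0a : h (x - 1) < t₀ := by rw [ht₀def]; linarith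
  have ht0b : t₀ < h x := by rw [ht₀def]; linarith
  have ht0x : t₀ < x := ht0b.trans hx
  set t₁ : ℝ := (h y + h (y + 1)) / 2 with ht₁def
  have hy1 : h y < h (y + 1) := sh (by linarith)
  have ht1a : h y < t₁ := by rw [ht₁def]; linarith
  have ht1b : t₁ < h (y + 1) := by rw [ht₁def]; linarith
  have hyt1 : y < t₁ := hy.trans ht1a
  have tendA : Tendsto (fun n => (g.symm : ℝ → ℝ)^[n] t₀) atTop (𝓝 x) :=
    tendsto_iterate_up g.symm sG x t₀ Gx ht0x (fun s hs => hGpos s hs)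
  have tendB : Tendsto (fun n => (g.symm : ℝ → ℝ)^[n] t₁) atTop (𝓝 y) :=
    tendsto_iterate_down g.symm sG y t₁ Gy hyt1 (fun s hs => hGneg s hs)
  have evA : ∀ᶠ n : ℕ in atTop, t₀ < h ((g.symm : ℝ → ℝ)^[n] t₀) :=
    ((h.continuous.tendsto x).comp tendA).eventually (eventually_gt_nhds ht0b)
  have evB : ∀ᶠ n : ℕ in atTop, h ((g.symm : ℝ → ℝ)^[n] t₁) < t₁ :=
    ((h.continuous.tendsto y).comp tendB).eventually (eventually_lt_nhds ht1a)
  obtain ⟨n₁, hn₁⟩ := eventually_atTop.mp evA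
  obtain ⟨n₂, hn₂⟩ := eventually_atTop.mp evB
  refine ⟨max n₁ n₂, fun n hn => ?_⟩
  have key : ∀ t : ℝ, (h * g⁻¹ ^ n) t = h ((g.symm : ℝ → ℝ)^[n] t) := by
    intro t
    rw [HomeoR.mul_apply, HomeoR.pow_apply, HomeoR.inv_eq_symm]
  have fcont : Continuous (fun t : ℝ => h ((g.symm : ℝ → ℝ)^[n] t) - t) :=
    (h.continuous.comp (g.symm.continuous.iterate n)).sub continuous_id
  have fx : h ((g.symm : ℝ → ℝ)^[n] x) - x < 0 := by
    rw [Function.iterate_fixed Gx]; linarith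
  have fy : 0 < h ((g.symm : ℝ → ℝ)^[n] y) - y := by
    rw [Function.iterate_fixed Gy]; linarith
  refine ⟨?_, ?_, ?_, ?_⟩
  · intro heq
    have hx' : (h * g⁻¹ ^ n) x = x := by rw [heq]; rfl
    rw [key x, Function.iterate_fixed Gx] at hx'
    exact absurd hx' (ne_of_lt hx)
  · -- fixed point in (h (x-1), x)
    have ft0 : 0 < h ((g.symm : ℝ → ℝ)^[n] t₀) - t₀ := by
      have := hn₁ n (le_trans (le_max_left n₁ n₂) hn); linarith
    have hsub := intermediate_value_Ioo' (le_of_lt ht0x) fcont.continuousOn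
    have h0 : (0 : ℝ) ∈ Set.Ioo (h ((g.symm : ℝ → ℝ)^[n] x) - x)
        (h ((g.symm : ℝ → ℝ)^[n] t₀) - t₀) := ⟨fx, ft0⟩
    obtain ⟨p, hp, hp0⟩ := hsub h0
    refine ⟨p, ⟨ht0a.trans hp.1, hp.2⟩, ?_⟩
    rw [key p]; simp only at hp0; linarith
  · have hsub := intermediate_value_Ioo (le_of_lt hxy) fcont.continuousOn
    have h0 : (0 : ℝ) ∈ Set.Ioo (h ((g.symm : ℝ → ℝ)^[n] x) - x)
        (h ((g.symm : ℝ → ℝ)^[n] y) - y) := ⟨fx, fy⟩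
    obtain ⟨p, hp, hp0⟩ := hsub h0
    refine ⟨p, hp, ?_⟩
    rw [key p]; simp only at hp0; linarith
  · have ft1 : h ((g.symm : ℝ → ℝ)^[n] t₁) - t₁ < 0 := by
      have := hn₂ n (le_trans (le_max_right n₁ n₂) hn); linarith
    have hsub := intermediate_value_Ioo' (le_of_lt hyt1) fcont.continuousOn
    have h0 : (0 : ℝ) ∈ Set.Ioo (h ((g.symm : ℝ → ℝ)^[n] t₁) - t₁)
        (h ((g.symm : ℝ → ℝ)^[n] y) - y) := ⟨ft1, fy⟩
    obtain ⟨p, hp, hp0⟩ := hsub h0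
    refine ⟨p, ⟨hp.1, hp.2.trans ht1b⟩, ?_⟩
    rw [key p]; simp only at hp0; linarith
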